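/- Assume the standard scarred-sequence setting and suppose additionally given, for each N, a subset L_N ⊆ I_N such that the supports X_{N,i} for i ∈ L_N are pairwise disjoint. Then ‖(Σ_{i∈L_N} P_{N,i}) A_N‖ → 0 as N → ∞. -/

import Mathlib

open Filter
open scoped BigOperators

noncomputable section

/-- The `M`-qudit space: complex functions on configurations `Fin M → Fin d`,
with the standard (Euclidean) inner product. -/
abbrev QuditSpace (d M : ℕ) : Type := EuclideanSpace ℂ (Fin M → Fin d)

/-- The computational basis vector indexed by the configuration `s`. -/
def basisVec {d M : ℕ} (s : Fin M → Fin d) : QuditSpace d M :=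
  EuclideanSpace.single s 1

/-- The matrix element `⟨e_s, T e_t⟩` of an operator `T` on the qudit space. -/
def matElem {d M : ℕ} (T : QuditSpace d M →L[ℂ] QuditSpace d M)
    (s t : Fin M → Fin d) : ℂ :=
  inner ℂ (basisVec s) (T (basisVec t))

/-- `T` is supported on the set of sites `X`: its matrix elements vanish whenever the two
configurations differ at a site outside `X`, and (among configuration pairs agreeing
outside `X`) they depend only on the restrictions of the configurations to `X`. -/
def SupportedOn {d M : ℕ} (X : Finset (Fin M))
    (T : QuditSpace d M →L[ℂ] QuditSpace d M) : Prop :=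
  (∀ s t : Fin M → Fin d, (∃ j ∉ X, s j ≠ t j) → matElem T s t = 0) ∧
  (∀ s t s' t' : Fin M → Fin d,
      (∀ j ∈ X, s j = s' j) → (∀ j ∈ X, t j = t' j) →
      (∀ j ∉ X, s j = t j) → (∀ j ∉ X, s' j = t' j) →
      matElem T s t = matElem T s' t')

/-- An orthogonal projection: a self-adjoint idempotent operator. -/
def IsOrthProj {d M : ℕ} (P : QuditSpace d M →L[ℂ] QuditSpace d M) : Prop :=
  (∀ v w : QuditSpace d M, (inner ℂ (P v) w : ℂ) = inner ℂ v (P w)) ∧ P ∘L P = P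


lemma qapply_sum {d M : ℕ} {α : Type*} (F : Finset α) (f : α → QuditSpace d M)
    (s : Fin M → Fin d) : (∑ u ∈ F, f u) s = ∑ u ∈ F, f u s := by
  exact map_sum (EuclideanSpace.proj s : QuditSpace d M →L[ℂ] ℂ) f F

lemma matElem_eq {d M : ℕ} (T : QuditSpace d M →L[ℂ] QuditSpace d M) (s t : Fin M → Fin d) :
    matElem T s t = T (basisVec t) s := by
  simp [matElem, basisVec, EuclideanSpace.inner_single_left]

lemma expand {d M : ℕ} (x : QuditSpace d M) : x = ∑ u : Fin M → Fin d, x u • basisVec u := by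
  ext s
  rw [qapply_sum]
  simp [basisVec, EuclideanSpace.single_apply]

lemma matElem_comp {d M : ℕ} (P Q : QuditSpace d M →L[ℂ] QuditSpace d M)
    (s t : Fin M → Fin d) :
    matElem (P ∘L Q) s t = ∑ u : Fin M → Fin d, matElem P s u * matElem Q u t := by
  rw [matElem_eq]
  simp only [ContinuousLinearMap.comp_apply]
  conv_lhs => rw [expand (Q (basisVec t))]
  rw [map_sum, qapply_sum]
  simp [matElem_eq, mul_comm]

lemma op_ext {d M : ℕ} (P Q : QuditSpace d M →L[ℂ] QuditSpace d M)
    (h : ∀ s t, matElem P s t = matElem Q s t) : P = Q := by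
  have hb : ∀ t, P (basisVec t) = Q (basisVec t) := by
    intro t; ext s
    rw [← matElem_eq, ← matElem_eq]; exact h s t
  refine ContinuousLinearMap.ext fun x => ?_
  conv_lhs => rw [expand x]
  conv_rhs => rw [expand x]
  rw [map_sum, map_sum]
  exact Finset.sum_congr rfl fun u _ => by rw [map_smul, map_smul, hb]

lemma commute_of_disjoint {d M : ℕ} {X Y : Finset (Fin M)}
    {P Q : QuditSpace d M →L[ℂ] QuditSpace d M}
    (hXY : Disjoint X Y) (hP : SupportedOn X P) (hQ : SupportedOn Y Q) :
    P ∘L Q = Q ∘L P := by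
  apply op_ext
  intro s t
  rw [matElem_comp, matElem_comp]
  by_cases hst : ∀ j, j ∉ X → j ∉ Y → s j = t j
  · -- single nonvanishing term on each side
    classical
    set u₀ : Fin M → Fin d := fun j => if j ∈ X then t j else s j with hu₀
    set v₀ : Fin M → Fin d := fun j => if j ∈ Y then t j else s j with hv₀
    rw [Finset.sum_eq_single u₀ ?_ (by simp), Finset.sum_eq_single v₀ ?_ (by simp)]
    · -- matElem P s u₀ * matElem Q u₀ t = matElem Q s v₀ * matElem P v₀ t
      have e1 : matElem P s u₀ = matElem P v₀ t := by
        apply hP.2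
        · intro j hj
          have hjY : j ∉ Y := fun h => (Finset.disjoint_left.mp hXY hj) h
          simp [hv₀, hjY]
        · intro j hj; simp [hu₀, hj]
        · intro j hj; simp [hu₀, hj]
        · intro j hj
          by_cases hjY : j ∈ Y
          · simp [hv₀, hjY]
          · simp [hv₀, hjY, hst j hj hjY]
      have e2 : matElem Q u₀ t = matElem Q s v₀ := by
        apply hQ.2
        · intro j hj
          have hjX : j ∉ X := fun h => (Finset.disjoint_left.mp hXY h) hj
          simp [hu₀, hjX]
        · intro j hj; simp [hv₀, hj]
        · intro j hj
          by_cases hjX : j ∈ X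
          · simp [hu₀, hjX]
          · simp [hu₀, hjX, hst j hjX hj]
        · intro j hj; simp [hv₀, hj]
      rw [e1, e2]; ring
    · -- other terms vanish on RHS
      intro v _ hv
      have : ∃ j, v j ≠ v₀ j := by
        by_contra h; push_neg at h; exact hv (funext h)
      obtain ⟨j, hj⟩ := this
      by_cases hjY : j ∈ Y
      · have hjX : j ∉ X := fun h => (Finset.disjoint_left.mp hXY h) hjY
        have : v j ≠ t j := by simpa [hv₀, hjY] using hj
        rw [hP.1 v t ⟨j, hjX, this⟩, mul_zero]
      · have : s j ≠ v j := by
          intro h; apply hj; simp [hv₀, hjY, ← h]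
        rw [hQ.1 s v ⟨j, hjY, this⟩, zero_mul]
    · -- other terms vanish on LHS
      intro u _ hu
      have : ∃ j, u j ≠ u₀ j := by
        by_contra h; push_neg at h; exact hu (funext h)
      obtain ⟨j, hj⟩ := this
      by_cases hjX : j ∈ X
      · have hjY : j ∉ Y := fun h => (Finset.disjoint_left.mp hXY hjX) h
        have : u j ≠ t j := by simpa [hu₀, hjX] using hj
        rw [hQ.1 u t ⟨j, hjY, this⟩, mul_zero]
      · have : s j ≠ u j := by
          intro h; apply hj; simp [hu₀, hjX, ← h]
        rw [hP.1 s u ⟨j, hjX, this⟩, zero_mul]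
  · -- both sides vanish
    push_neg at hst
    obtain ⟨j, hjX, hjY, hj⟩ := hst
    rw [Finset.sum_eq_zero, Finset.sum_eq_zero]
    · intro u _
      by_cases h : u j = t j
      · have : s j ≠ u j := fun hh => hj (hh.trans h)
        rw [hQ.1 s u ⟨j, hjY, this⟩, zero_mul]
      · rw [hP.1 u t ⟨j, hjX, h⟩, mul_zero]
    · intro u _
      by_cases h : u j = t j
      · have : s j ≠ u j := fun hh => hj (hh.trans h)
        rw [hP.1 s u ⟨j, hjX, this⟩, zero_mul]
      · rw [hQ.1 u t ⟨j, hjY, h⟩, mul_zero]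

lemma idem_apply {d M : ℕ} {P : QuditSpace d M →L[ℂ] QuditSpace d M}
    (hP : IsOrthProj P) (x : QuditSpace d M) : P (P x) = P x := by
  conv_rhs => rw [← hP.2]
  rfl

lemma inner_proj_self {d M : ℕ} {P : QuditSpace d M →L[ℂ] QuditSpace d M}
    (hP : IsOrthProj P) (A : QuditSpace d M) :
    (inner ℂ A (P A) : ℂ) = (‖P A‖ : ℂ) ^ 2 := by
  calc (inner ℂ A (P A) : ℂ) = inner ℂ A (P (P A)) := by rw [idem_apply hP]
    _ = inner ℂ (P A) (P A) := (hP.1 A (P A)).symm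
    _ = (‖P A‖ : ℂ) ^ 2 := inner_self_eq_norm_sq_to_K (P A)

lemma inner_proj_pair {d M : ℕ} {P Q : QuditSpace d M →L[ℂ] QuditSpace d M}
    (hP : IsOrthProj P) (hQ : IsOrthProj Q) (hcomm : P ∘L Q = Q ∘L P)
    (A : QuditSpace d M) :
    (inner ℂ (P A) (Q A) : ℂ) = (‖Q (P A)‖ : ℂ) ^ 2 := by
  have hc : P (Q A) = Q (P A) := by
    have := congrArg (fun T : QuditSpace d M →L[ℂ] QuditSpace d M => T A) hcomm
    simpa using this
  calc (inner ℂ (P A) (Q A) : ℂ)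
      = inner ℂ (P (P A)) (Q A) := by rw [idem_apply hP]
    _ = inner ℂ (P A) (P (Q A)) := hP.1 (P A) (Q A)
    _ = inner ℂ (P A) (Q (P A)) := by rw [hc]
    _ = inner ℂ (P A) (Q (Q (P A))) := by rw [idem_apply hQ]
    _ = inner ℂ (Q (P A)) (Q (P A)) := (hQ.1 (P A) (Q (P A))).symm
    _ = (‖Q (P A)‖ : ℂ) ^ 2 := inner_self_eq_norm_sq_to_K _

lemma layer_bound {d M : ℕ} {ι : Type} [Fintype ι] [DecidableEq ι] (C : ℕ)
    (X : ι → Finset (Fin M))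
    (P : ι → QuditSpace d M →L[ℂ] QuditSpace d M)
    (hC : ∀ i : ι,
      (Finset.univ.filter fun i' : ι => i' ≠ i ∧ (X i ∩ X i').Nonempty).card ≤ C)
    (hproj : ∀ i, IsOrthProj (P i)) (hsupp : ∀ i, SupportedOn (X i) (P i))
    (A : QuditSpace d M) (hA : ‖A‖ = 1)
    (L : Finset ι) (hL : ∀ i ∈ L, ∀ i' ∈ L, i ≠ i' → Disjoint (X i) (X i')) :
    ‖(∑ i ∈ L, P i) A‖ ^ 2 ≤ (C + 1) * ‖(∑ i, P i) A‖ + ‖(∑ i, P i) A‖ ^ 2 := by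
  classical
  set η : ℝ := ‖(∑ i, P i) A‖ with hη
  set v : ι → QuditSpace d M := fun i => P i A with hv
  set ε : ι → ℝ := fun i => ‖v i‖ ^ 2 with hεdef
  set f : ι → ι → ℝ := fun i j => (inner ℂ (v i) (v j) : ℂ).re with hfdef
  have hεnn : ∀ i, 0 ≤ ε i := fun i => sq_nonneg _
  have hfdiag : ∀ i, f i i = ε i := by
    intro i
    have := inner_self_eq_norm_sq (𝕜 := ℂ) (v i)
    simp only [hfdef]
    simpa using this
  have hfdisj : ∀ i j, i ≠ j → Disjoint (X i) (X j) → 0 ≤ f i j := by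
    intro i j hij hd
    have hcomm := commute_of_disjoint hd (hsupp i) (hsupp j)
    have := inner_proj_pair (hproj i) (hproj j) hcomm A
    simp only [hfdef, hv, this]
    rw [← Complex.ofReal_pow, Complex.ofReal_re]
    positivity
  have hfabs : ∀ i j, -((ε i + ε j) / 2) ≤ f i j := by
    intro i j
    have h1 : |f i j| ≤ ‖v i‖ * ‖v j‖ := by
      have := norm_inner_le_norm (𝕜 := ℂ) (v i) (v j)
      have h2 : |(inner ℂ (v i) (v j) : ℂ).re| ≤ ‖(inner ℂ (v i) (v j) : ℂ)‖ :=
        Complex.abs_re_le_norm _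
      exact h2.trans this
    have hεi : ε i = ‖v i‖ ^ 2 := rfl
    have hεj : ε j = ‖v j‖ ^ 2 := rfl
    have h3 : ‖v i‖ * ‖v j‖ ≤ (ε i + ε j) / 2 := by
      rw [hεi, hεj]
      nlinarith [sq_nonneg (‖v i‖ - ‖v j‖)]
    have := (abs_le.mp (h1.trans h3)).1
    linarith
  -- sum of ε is at most η
  have hεsum : ∑ i, ε i ≤ η := by
    have hinner : (inner ℂ A ((∑ i, P i) A) : ℂ) = ((∑ i, ε i : ℝ) : ℂ) := by
      rw [ContinuousLinearMap.sum_apply, inner_sum]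
      push_cast
      refine Finset.sum_congr rfl fun i _ => ?_
      rw [inner_proj_self (hproj i) A]
      norm_cast
    have h1 : (∑ i, ε i) = (inner ℂ A ((∑ i, P i) A) : ℂ).re := by rw [hinner]; simp
    have h2 : (inner ℂ A ((∑ i, P i) A) : ℂ).re ≤ ‖(inner ℂ A ((∑ i, P i) A) : ℂ)‖ :=
      Complex.re_le_norm _
    have h3 : ‖(inner ℂ A ((∑ i, P i) A) : ℂ)‖ ≤ ‖A‖ * ‖(∑ i, P i) A‖ :=
      norm_inner_le_norm _ _
    rw [hA, one_mul] at h3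
    rw [h1]; exact h2.trans h3
  -- norm squared as double sums
  have hsq : ∀ s : Finset ι, ‖(∑ i ∈ s, P i) A‖ ^ 2 = ∑ i ∈ s, ∑ j ∈ s, f i j := by
    intro s
    have h1 : (inner ℂ ((∑ i ∈ s, P i) A) ((∑ i ∈ s, P i) A) : ℂ)
        = ∑ i ∈ s, ∑ j ∈ s, (inner ℂ (v i) (v j) : ℂ) := by
      rw [ContinuousLinearMap.sum_apply, sum_inner]
      exact Finset.sum_congr rfl fun i _ => by rw [inner_sum]
    have h2 : ‖(∑ i ∈ s, P i) A‖ ^ 2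
        = (inner ℂ ((∑ i ∈ s, P i) A) ((∑ i ∈ s, P i) A) : ℂ).re := by
      have := inner_self_eq_norm_sq (𝕜 := ℂ) ((∑ i ∈ s, P i) A)
      simpa using this.symm
    rw [h2, h1, Complex.re_sum]
    exact Finset.sum_congr rfl fun i _ => by rw [Complex.re_sum]
  -- the nonnegative "disjoint pair" part
  set g : ι → ι → ℝ := fun i j =>
    if i ≠ j ∧ Disjoint (X i) (X j) then f i j else 0 with hgdef
  have hg0 : ∀ i j, 0 ≤ g i j := by
    intro i j
    simp only [hgdef]
    split
    · next h => exact hfdisj i j h.1 h.2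
    · exact le_refl 0
  -- Step 1 : restrict to L
  have step1 : ∑ i ∈ L, ∑ j ∈ L, f i j ≤ ∑ i, ε i + ∑ i, ∑ j, g i j := by
    have hpt : ∀ i ∈ L, ∀ j ∈ L, f i j = (if i = j then ε i else 0) + g i j := by
      intro i hi j hj
      by_cases hij : i = j
      · subst hij
        simp [hgdef, hfdiag i]
      · have hd : Disjoint (X i) (X j) := hL i hi j hj hij
        simp [hgdef, hij, hd]
    have h1 : ∑ i ∈ L, ∑ j ∈ L, f i j
        = ∑ i ∈ L, ((∑ j ∈ L, if i = j then ε i else 0) + ∑ j ∈ L, g i j) := by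
      refine Finset.sum_congr rfl fun i hi => ?_
      rw [← Finset.sum_add_distrib]
      exact Finset.sum_congr rfl fun j hj => hpt i hi j hj
    rw [h1, Finset.sum_add_distrib]
    have h2 : ∑ i ∈ L, (∑ j ∈ L, if i = j then ε i else 0) ≤ ∑ i, ε i := by
      have h3 : ∀ i ∈ L, (∑ j ∈ L, if i = j then ε i else 0) = ε i := by
        intro i hi
        rw [Finset.sum_ite_eq L i (fun _ => ε i), if_pos hi]
      calc ∑ i ∈ L, (∑ j ∈ L, if i = j then ε i else 0) = ∑ i ∈ L, ε i :=
            Finset.sum_congr rfl h3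
        _ ≤ ∑ i, ε i :=
            Finset.sum_le_sum_of_subset_of_nonneg (Finset.subset_univ L)
              (fun i _ _ => hεnn i)
    have h4 : ∑ i ∈ L, ∑ j ∈ L, g i j ≤ ∑ i, ∑ j, g i j := by
      have h5 : ∀ i, ∑ j ∈ L, g i j ≤ ∑ j, g i j :=
        fun i => Finset.sum_le_sum_of_subset_of_nonneg (Finset.subset_univ L)
          (fun j _ _ => hg0 i j)
      calc ∑ i ∈ L, ∑ j ∈ L, g i j ≤ ∑ i ∈ L, ∑ j, g i j :=
            Finset.sum_le_sum fun i _ => h5 i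
        _ ≤ ∑ i, ∑ j, g i j :=
            Finset.sum_le_sum_of_subset_of_nonneg (Finset.subset_univ L)
              (fun i _ _ => Finset.sum_nonneg fun j _ => hg0 i j)
    exact add_le_add h2 h4
  -- Step 2 : compare the g-sum with η² plus the overlap correction
  have hub : ∀ i j, g i j ≤ f i j +
      (if i ≠ j ∧ ¬ Disjoint (X i) (X j) then (ε i + ε j) / 2 else 0) := by
    intro i j
    by_cases h1 : i = j
    · subst h1
      simp only [hgdef, ne_eq, not_true_eq_false, false_and, if_false, hfdiag i]
      have := hεnn i; simp; linarith
    · by_cases h2 : Disjoint (X i) (X j)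
      · simp [hgdef, h1, h2]
      · simp only [hgdef, ne_eq, h1, not_false_eq_true, h2, and_false, if_false,
          true_and, and_true, if_true]
        have := hfabs i j; linarith
  have hover : ∑ i, ∑ j,
      (if i ≠ j ∧ ¬ Disjoint (X i) (X j) then (ε i + ε j) / 2 else 0)
      ≤ (C : ℝ) * ∑ i, ε i := by
    have hsplit : ∀ i j : ι,
        (if i ≠ j ∧ ¬ Disjoint (X i) (X j) then (ε i + ε j) / 2 else 0)
        = (if i ≠ j ∧ ¬ Disjoint (X i) (X j) then ε i / 2 else 0)
          + (if i ≠ j ∧ ¬ Disjoint (X i) (X j) then ε j / 2 else 0) := by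
      intro i j; split <;> ring
    have hcard1 : ∀ i : ι,
        (Finset.univ.filter fun j : ι => i ≠ j ∧ ¬ Disjoint (X i) (X j)).card ≤ C := by
      intro i
      refine le_trans (le_of_eq ?_) (hC i)
      congr 1
      apply Finset.filter_congr
      intro j _
      simp only [ne_comm, Finset.not_disjoint_iff_nonempty_inter]
    have hcard2 : ∀ j : ι,
        (Finset.univ.filter fun i : ι => i ≠ j ∧ ¬ Disjoint (X i) (X j)).card ≤ C := by
      intro j
      refine le_trans (le_of_eq ?_) (hC j)
      congr 1
      apply Finset.filter_congr
      intro i _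
      rw [Finset.not_disjoint_iff_nonempty_inter, Finset.inter_comm]
    have hS1 : ∑ i, ∑ j, (if i ≠ j ∧ ¬ Disjoint (X i) (X j) then ε i / 2 else 0)
        ≤ ∑ i, (C : ℝ) * (ε i / 2) := by
      refine Finset.sum_le_sum fun i _ => ?_
      rw [← Finset.sum_filter, Finset.sum_const, nsmul_eq_mul]
      have h6 : 0 ≤ ε i / 2 := by have := hεnn i; linarith
      exact mul_le_mul_of_nonneg_right (by exact_mod_cast hcard1 i) h6
    have hS2 : ∑ i, ∑ j, (if i ≠ j ∧ ¬ Disjoint (X i) (X j) then ε j / 2 else 0)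
        ≤ ∑ j, (C : ℝ) * (ε j / 2) := by
      rw [Finset.sum_comm]
      refine Finset.sum_le_sum fun j _ => ?_
      rw [← Finset.sum_filter, Finset.sum_const, nsmul_eq_mul]
      have h6 : 0 ≤ ε j / 2 := by have := hεnn j; linarith
      exact mul_le_mul_of_nonneg_right (by exact_mod_cast hcard2 j) h6
    calc ∑ i, ∑ j, (if i ≠ j ∧ ¬ Disjoint (X i) (X j) then (ε i + ε j) / 2 else 0)
        = (∑ i, ∑ j, (if i ≠ j ∧ ¬ Disjoint (X i) (X j) then ε i / 2 else 0))
          + ∑ i, ∑ j, (if i ≠ j ∧ ¬ Disjoint (X i) (X j) then ε j / 2 else 0) := by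
          rw [← Finset.sum_add_distrib]
          refine Finset.sum_congr rfl fun i _ => ?_
          rw [← Finset.sum_add_distrib]
          exact Finset.sum_congr rfl fun j _ => hsplit i j
      _ ≤ (∑ i, (C : ℝ) * (ε i / 2)) + ∑ j, (C : ℝ) * (ε j / 2) := add_le_add hS1 hS2
      _ = (C : ℝ) * ∑ i, ε i := by
          rw [← Finset.mul_sum, ← Finset.sum_div]
          ring
  have step2 : ∑ i, ∑ j, g i j ≤ η ^ 2 + (C : ℝ) * ∑ i, ε i := by
    have h1 : ∑ i, ∑ j, g i j ≤ ∑ i, ∑ j, (f i j +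
        (if i ≠ j ∧ ¬ Disjoint (X i) (X j) then (ε i + ε j) / 2 else 0)) :=
      Finset.sum_le_sum fun i _ => Finset.sum_le_sum fun j _ => hub i j
    have h2 : ∑ i, ∑ j, (f i j +
        (if i ≠ j ∧ ¬ Disjoint (X i) (X j) then (ε i + ε j) / 2 else 0))
        = (∑ i, ∑ j, f i j) + ∑ i, ∑ j,
          (if i ≠ j ∧ ¬ Disjoint (X i) (X j) then (ε i + ε j) / 2 else 0) := by
      rw [← Finset.sum_add_distrib]
      refine Finset.sum_congr rfl fun i _ => ?_
      rw [← Finset.sum_add_distrib]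
    have h3 : η ^ 2 = ∑ i, ∑ j, f i j := by rw [hη]; exact hsq Finset.univ
    rw [h2, ← h3] at h1
    exact h1.trans (add_le_add (le_refl _) hover)
  -- Combine
  have hCη : (C : ℝ) * ∑ i, ε i ≤ (C : ℝ) * η :=
    mul_le_mul_of_nonneg_left hεsum (Nat.cast_nonneg C)
  calc ‖(∑ i ∈ L, P i) A‖ ^ 2 = ∑ i ∈ L, ∑ j ∈ L, f i j := hsq L
    _ ≤ ∑ i, ε i + ∑ i, ∑ j, g i j := step1
    _ ≤ ∑ i, ε i + (η ^ 2 + (C : ℝ) * ∑ i, ε i) := add_le_add (le_refl _) step2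
    _ ≤ η + (η ^ 2 + (C : ℝ) * η) := by
        have := hεsum; have := hCη; linarith
    _ = ((C : ℝ) + 1) * η + η ^ 2 := by ring

/-- The intermediate claim in the proof of Proposition 2 of the paper (standard
scarred-sequence setting): a single circuit layer, i.e. a sum of the projectors `P_{N,i}` over
a set `L_N` of indices with pairwise disjoint supports, asymptotically annihilates `A_N`. -/
theorem layer_asymptotically_annihilates
    (d K C : ℕ) (hd : 2 ≤ d)
    (M : ℕ → ℕ) (I : ℕ → Type) [∀ N, Fintype (I N)] [∀ N, DecidableEq (I N)]
    (X : ∀ N, I N → Finset (Fin (M N)))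
    (P : ∀ N, (i : I N) → QuditSpace d (M N) →L[ℂ] QuditSpace d (M N))
    (A : ∀ N, QuditSpace d (M N))
    (hK : ∀ N (i : I N), (X N i).card ≤ K)
    (hC : ∀ N (i : I N),
      (Finset.univ.filter fun i' : I N => i' ≠ i ∧ (X N i ∩ X N i').Nonempty).card ≤ C)
    (hproj : ∀ N (i : I N), IsOrthProj (P N i))
    (hsupp : ∀ N (i : I N), SupportedOn (X N i) (P N i))
    (hA : ∀ N, ‖A N‖ = 1)
    (hlim : Tendsto (fun N => ‖(∑ i : I N, P N i) (A N)‖) atTop (nhds 0))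
    (L : ∀ N, Finset (I N))
    (hLdisj : ∀ N, ∀ i ∈ L N, ∀ i' ∈ L N, i ≠ i' → Disjoint (X N i) (X N i')) :
    Tendsto (fun N => ‖(∑ i ∈ L N, P N i) (A N)‖) atTop (nhds 0) := by
  classical
  have key : ∀ N, ‖(∑ i ∈ L N, P N i) (A N)‖ ^ 2
      ≤ ((C : ℝ) + 1) * ‖(∑ i : I N, P N i) (A N)‖ + ‖(∑ i : I N, P N i) (A N)‖ ^ 2 :=
    fun N => layer_bound C (X N) (P N) (hC N) (hproj N) (hsupp N) (A N) (hA N)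
      (L N) (hLdisj N)
  have hb : Tendsto (fun N => ((C : ℝ) + 1) * ‖(∑ i : I N, P N i) (A N)‖
      + ‖(∑ i : I N, P N i) (A N)‖ ^ 2) atTop (nhds 0) := by
    have h1 := hlim.const_mul ((C : ℝ) + 1)
    have h2 := hlim.pow 2
    have h3 := h1.add h2
    simpa using h3
  have hsq0 : Tendsto (fun N => ‖(∑ i ∈ L N, P N i) (A N)‖ ^ 2) atTop (nhds 0) :=
    squeeze_zero (fun N => sq_nonneg _) key hb
  have h4 := (Real.continuous_sqrt.tendsto 0).comp hsq0
  rw [Real.sqrt_zero] at h4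
  have h5 : (fun N => ‖(∑ i ∈ L N, P N i) (A N)‖)
      = fun N => Real.sqrt (‖(∑ i ∈ L N, P N i) (A N)‖ ^ 2) :=
    funext fun N => (Real.sqrt_sq (norm_nonneg _)).symm
  rw [h5]
  exact h4
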